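/- Let k be a field and n, m positive integers such that char k does not divide n − m. Then any unital k-algebra Q admitting a comeasuring of Frobenius algebras from the matrix Frobenius algebra M_m(k) to M_n(k) satisfies 1_Q = 0, i.e., Q = 0; in particular the universal comeasuring algebra A_{M_n(k),M_m(k)} is zero. -/

import Mathlib

open TensorProduct

/-- A comeasuring of Frobenius algebras from `(A, Δ_A, ν_A)` to `(B, Δ_B, ν_B)` with
coefficient algebra `Q`: a linear map `ρ : A → B ⊗ Q`, `ρ(a) = a⁽⁰⁾ ⊗ a⁽¹⁾`, which is an
algebra map and satisfies
`a^{(1)[0]} ⊗ a^{(2)[0]} ⊗ a^{(1)[1]}a^{(2)[1]} = a^{[0](1)} ⊗ a^{[0](2)} ⊗ a^{[1]}`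
and `ν_B(a⁽⁰⁾)a⁽¹⁾ = ν_A(a)1_Q`. -/
def IsFrobComeasuring {k A B Q : Type*} [CommRing k] [Ring A] [Algebra k A]
    [Ring B] [Algebra k B] [Ring Q] [Algebra k Q]
    (ΔA : A →ₗ[k] A ⊗[k] A) (νA : A →ₗ[k] k)
    (ΔB : B →ₗ[k] B ⊗[k] B) (νB : B →ₗ[k] k)
    (ρ : A →ₗ[k] B ⊗[k] Q) : Prop :=
  (∀ a a' : A, ρ (a * a') = ρ a * ρ a') ∧
  (ρ 1 = 1) ∧
  (∀ a : A,
    TensorProduct.map (LinearMap.id : B ⊗[k] B →ₗ[k] B ⊗[k] B) (LinearMap.mul' k Q)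
        (TensorProduct.tensorTensorTensorComm k B Q B Q
          (TensorProduct.map ρ ρ (ΔA a)))
      = TensorProduct.map ΔB (LinearMap.id : Q →ₗ[k] Q) (ρ a)) ∧
  (∀ a : A,
    TensorProduct.lid k Q
        (TensorProduct.map νB (LinearMap.id : Q →ₗ[k] Q) (ρ a)) = νA a • (1 : Q))

section GroupFrobenius

variable (k : Type*) [Field k] (G : Type*) [Group G] [Fintype G] [DecidableEq G]

/-- The Frobenius comultiplication `Δ(g) = Σ_{h ∈ G} gh⁻¹ ⊗ h` on a finite group
algebra. -/
noncomputable def groupComul :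
    MonoidAlgebra k G →ₗ[k] MonoidAlgebra k G ⊗[k] MonoidAlgebra k G :=
  (Finsupp.lsum k fun g =>
    LinearMap.toSpanSingleton k (MonoidAlgebra k G ⊗[k] MonoidAlgebra k G)
      (∑ h : G, MonoidAlgebra.single (g * h⁻¹) (1 : k) ⊗ₜ[k] MonoidAlgebra.single h (1 : k)))
      ∘ₗ (MonoidAlgebra.coeffLinearEquiv k).toLinearMap

/-- The Frobenius counit `ν(g) = δ_{g,1}` on a finite group algebra. -/
noncomputable def groupCounit : MonoidAlgebra k G →ₗ[k] k :=
  Finsupp.lapply (1 : G) ∘ₗ (MonoidAlgebra.coeffLinearEquiv k).toLinearMap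

end GroupFrobenius

section MatrixFrobenius

variable (k : Type*) [Field k] (n : ℕ)

/-- The Frobenius comultiplication `Δ(E_{ij}) = Σ_l E_{il} ⊗ E_{lj}` on the matrix
algebra `M_n(k)`. -/
noncomputable def matrixComul :
    Matrix (Fin n) (Fin n) k →ₗ[k]
      Matrix (Fin n) (Fin n) k ⊗[k] Matrix (Fin n) (Fin n) k where
  toFun M := ∑ i : Fin n, ∑ j : Fin n, ∑ l : Fin n,
    M i j • (Matrix.single i l (1 : k) ⊗ₜ[k] Matrix.single l j (1 : k))
  map_add' M N := by
    simp [Matrix.add_apply, add_smul, Finset.sum_add_distrib]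
  map_smul' c M := by
    simp [Matrix.smul_apply, smul_smul, Finset.smul_sum]

/-- The Frobenius counit on `M_n(k)` : the trace, `ν(E_{ij}) = δ_{ij}`. -/
noncomputable def matrixCounit : Matrix (Fin n) (Fin n) k →ₗ[k] k :=
  Matrix.traceLinearMap (Fin n) k k

end MatrixFrobenius

set_option synthInstance.maxHeartbeats 1000000
set_option maxHeartbeats 1000000

lemma mulAux {k B Q : Type*} [CommRing k] [Ring B] [Algebra k B] [Ring Q] [Algebra k Q]
    (u v : B ⊗[k] Q) :
    TensorProduct.map (LinearMap.mul' k B) (LinearMap.id : Q →ₗ[k] Q)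
      (TensorProduct.map (LinearMap.id : B ⊗[k] B →ₗ[k] B ⊗[k] B) (LinearMap.mul' k Q)
        (TensorProduct.tensorTensorTensorComm k B Q B Q (u ⊗ₜ[k] v))) = u * v := by
  induction u with
  | zero => simp
  | tmul b q =>
    induction v with
    | zero => simp
    | tmul b' q' => simp [Algebra.TensorProduct.tmul_mul_tmul]
    | add x y hx hy => simp_all [tmul_add, mul_add]
  | add x y hx hy => simp_all [add_tmul, add_mul]

lemma sum_stdBasisMatrix_diag (k : Type*) [Field k] (m : ℕ) :
    ∑ i : Fin m, Matrix.single i i (1:k) = 1 := by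
  conv_rhs => rw [Matrix.matrix_eq_sum_single (1 : Matrix (Fin m) (Fin m) k)]
  refine Finset.sum_congr rfl fun i _ => ?_
  have h : ∀ j : Fin m, Matrix.single i j ((1 : Matrix (Fin m) (Fin m) k) i j)
      = if i = j then Matrix.single i j 1 else 0 := fun j => by
    rw [Matrix.one_apply]; split <;> simp
  simp [h]

lemma matrixComul_one (k : Type*) [Field k] (m : ℕ) :
    matrixComul k m 1 = ∑ i : Fin m, ∑ l : Fin m,
      Matrix.single i l (1:k) ⊗ₜ[k] Matrix.single l i (1:k) := by
  show ∑ i : Fin m, ∑ j : Fin m, ∑ l : Fin m, (1:Matrix (Fin m) (Fin m) k) i j •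
      (Matrix.single i l (1 : k) ⊗ₜ[k] Matrix.single l j (1 : k)) = _
  rw [Finset.sum_congr rfl fun i _ => Finset.sum_comm]
  simp [Matrix.one_apply, ite_smul]

/-- If `char k` does not divide `n − m` (with `n, m` positive), then any unital
`k`-algebra `Q` carrying a comeasuring of Frobenius algebras from `M_m(k)` to `M_n(k)`
satisfies `1_Q = 0`, i.e. `Q = 0`; in particular the universal comeasuring algebra
between these matrix Frobenius algebras is zero. -/
theorem matrix_comeasuring_trivial {k : Type*} [Field k] {n m : ℕ}
    (hn : 0 < n) (hm : 0 < m)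
    (hchar : ¬ ((ringChar k : ℤ) ∣ (n : ℤ) - (m : ℤ)))
    (Q : Type*) [Ring Q] [Algebra k Q]
    (ρ : Matrix (Fin m) (Fin m) k →ₗ[k] Matrix (Fin n) (Fin n) k ⊗[k] Q)
    (hρ : IsFrobComeasuring (matrixComul k m) (matrixCounit k m)
      (matrixComul k n) (matrixCounit k n) ρ) :
    (1 : Q) = 0 ∧ Subsingleton Q := by
  classical
  obtain ⟨hmul, hone, hcomul, -⟩ := hρ
  set Bn := Matrix (Fin n) (Fin n) k
  have h1 := congrArg (TensorProduct.map (LinearMap.mul' k Bn) (LinearMap.id : Q →ₗ[k] Q))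
    (hcomul 1)
  -- compute the left-hand side
  have hL : TensorProduct.map (LinearMap.mul' k Bn) (LinearMap.id : Q →ₗ[k] Q)
      (TensorProduct.map (LinearMap.id : Bn ⊗[k] Bn →ₗ[k] Bn ⊗[k] Bn) (LinearMap.mul' k Q)
        (TensorProduct.tensorTensorTensorComm k Bn Q Bn Q
          (TensorProduct.map ρ ρ (matrixComul k m 1))))
      = m • (1 : Bn ⊗[k] Q) := by
    rw [matrixComul_one]
    simp only [map_sum, TensorProduct.map_tmul]
    have key : ∀ i l : Fin m,
        TensorProduct.map (LinearMap.mul' k Bn) (LinearMap.id : Q →ₗ[k] Q)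
          (TensorProduct.map (LinearMap.id : Bn ⊗[k] Bn →ₗ[k] Bn ⊗[k] Bn) (LinearMap.mul' k Q)
            (TensorProduct.tensorTensorTensorComm k Bn Q Bn Q
              (ρ (Matrix.single i l (1:k)) ⊗ₜ[k] ρ (Matrix.single l i (1:k)))))
        = ρ (Matrix.single i i (1:k)) := by
      intro i l
      rw [mulAux, ← hmul, Matrix.single_mul_single_same, one_mul]
    rw [Finset.sum_congr rfl fun i _ => Finset.sum_congr rfl fun l _ => key i l]
    simp only [Finset.sum_const, Finset.card_univ, Fintype.card_fin, ← Finset.smul_sum,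
      ← map_sum, sum_stdBasisMatrix_diag, hone]
  -- compute the right-hand side
  have hR : TensorProduct.map (LinearMap.mul' k Bn) (LinearMap.id : Q →ₗ[k] Q)
      (TensorProduct.map (matrixComul k n) (LinearMap.id : Q →ₗ[k] Q) (ρ 1))
      = n • (1 : Bn ⊗[k] Q) := by
    rw [hone, Algebra.TensorProduct.one_def, TensorProduct.map_tmul, LinearMap.id_apply,
      matrixComul_one]
    simp only [TensorProduct.sum_tmul, map_sum, TensorProduct.map_tmul,
      LinearMap.mul'_apply, LinearMap.id_apply, Matrix.single_mul_single_same, one_mul]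
    have hterm : ∀ p q : Fin n,
        (Matrix.single p q (1:k) * Matrix.single q p (1:k)) ⊗ₜ[k] (1:Q)
        = Matrix.single p p (1:k) ⊗ₜ[k] (1:Q) := fun p q => by
      rw [Matrix.single_mul_single_same, one_mul]
    have hconst : ∀ p : Fin n, ∑ _q : Fin n,
        (Matrix.single p p (1:k) ⊗ₜ[k] (1:Q))
        = n • (Matrix.single p p (1:k) ⊗ₜ[k] (1:Q)) := fun p => by simp
    rw [Finset.sum_congr rfl fun p _ => Finset.sum_congr rfl fun q _ => hterm p q,
      Finset.sum_congr rfl fun p _ => hconst p, ← Finset.smul_sum,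
      ← TensorProduct.sum_tmul, sum_stdBasisMatrix_diag]
  rw [hL, hR] at h1
  -- apply a functional killing the matrix factor
  let i0 : Fin n := ⟨0, hn⟩
  let entry : Bn →ₗ[k] k :=
    { toFun := fun M => M i0 i0
      map_add' := fun _ _ => rfl
      map_smul' := fun _ _ => rfl }
  let f : Bn ⊗[k] Q →ₗ[k] Q :=
    (TensorProduct.lid k Q).toLinearMap ∘ₗ
      TensorProduct.map entry (LinearMap.id : Q →ₗ[k] Q)
  have hf1 : f 1 = 1 := by
    simp only [f, entry, Algebra.TensorProduct.one_def, LinearMap.coe_comp,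
      Function.comp_apply, TensorProduct.map_tmul, LinearMap.id_apply,
      LinearEquiv.coe_coe, TensorProduct.lid_tmul, LinearMap.coe_mk, AddHom.coe_mk]
    show ((1 : Matrix (Fin n) (Fin n) k) i0 i0) • (1:Q) = 1
    rw [Matrix.one_apply_eq, one_smul]
  have h2 : m • (1 : Q) = n • (1 : Q) := by
    have h3 := congrArg f h1
    rwa [map_nsmul, map_nsmul, hf1] at h3
  have hk0 : ((n : k) - (m : k)) • (1 : Q) = 0 := by
    rw [sub_smul, Nat.cast_smul_eq_nsmul, Nat.cast_smul_eq_nsmul, ← h2, sub_self]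
  have hc : ((n : k) - (m : k)) ≠ 0 := by
    intro h
    apply hchar
    refine (CharP.intCast_eq_zero_iff k (ringChar k) _).mp ?_
    push_cast
    exact h
  have h1Q : (1 : Q) = 0 := by
    calc (1:Q) = (((n:k)-(m:k))⁻¹ * ((n:k)-(m:k))) • (1:Q) := by
          rw [inv_mul_cancel₀ hc, one_smul]
      _ = ((n:k)-(m:k))⁻¹ • (((n:k)-(m:k)) • (1:Q)) := by rw [mul_smul]
      _ = 0 := by rw [hk0, smul_zero]
  exact ⟨h1Q, subsingleton_of_zero_eq_one h1Q.symm⟩
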